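/- Let A, B be expansive matrices with ε = ln|det(A)|/ln|det(B)|. Then sup_{k ∈ ℤ} ‖(Aᵀ)^{-k} (Bᵀ)^{⌊εk⌋}‖ < ∞ holds if and only if sup_{k ∈ ℤ} ‖A^{-k} B^{⌊εk⌋}‖ < ∞. (Equivalence of A and B is preserved under transposition.) -/

import Mathlib

open Matrix
open scoped Matrix.Norms.L2Operator

noncomputable def opNorm {n : Type*} [Fintype n] [DecidableEq n] (A : Matrix n n ℝ) : ℝ :=
  ‖Matrix.toEuclideanCLM (𝕜 := ℝ) (n := n) A‖

def Expansive {n : Type*} [Fintype n] [DecidableEq n] (A : Matrix n n ℝ) : Prop :=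
  IsUnit A ∧ ∀ μ ∈ spectrum ℂ (A.map Complex.ofReal), 1 < ‖μ‖

noncomputable def eps {d : ℕ} (A B : Matrix (Fin d) (Fin d) ℝ) : ℝ :=
  Real.log |A.det| / Real.log |B.det|

section Aux
open Polynomial
variable {d : ℕ}

lemma opNorm_eq (A : Matrix (Fin d) (Fin d) ℝ) : opNorm A = ‖A‖ := rfl

lemma norm_transpose' (A : Matrix (Fin d) (Fin d) ℝ) : ‖Aᵀ‖ = ‖A‖ := by
  rw [← conjTranspose_eq_transpose_of_trivial, l2_opNorm_conjTranspose]

lemma coord_le_norm (x : EuclideanSpace ℝ (Fin d)) (i : Fin d) : |x i| ≤ ‖x‖ := by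
  have h := abs_real_inner_le_norm (EuclideanSpace.single i (1:ℝ)) x
  rwa [EuclideanSpace.inner_single_left, EuclideanSpace.norm_single, norm_one, one_mul,
    RingHom.map_one, one_mul] at h

lemma entry_le_norm (A : Matrix (Fin d) (Fin d) ℝ) (i j : Fin d) : |A i j| ≤ ‖A‖ := by
  have h := A.l2_opNorm_mulVec (EuclideanSpace.single j (1:ℝ))
  rw [EuclideanSpace.norm_single, norm_one, mul_one] at h
  refine le_trans ?_ (le_trans (coord_le_norm _ i) h)
  have : ((EuclideanSpace.equiv (Fin d) ℝ).symm <| A *ᵥ (EuclideanSpace.single j (1:ℝ))) i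
      = A i j := by
    have : (EuclideanSpace.single j (1:ℝ) : Fin d → ℝ) = Pi.single j 1 := rfl
    rw [this]
    simp [mulVec_single]
  rw [this]

lemma norm_stdBasisMatrix_le (i j : Fin d) : ‖Matrix.single i j (1:ℝ)‖ ≤ 1 := by
  rw [l2_opNorm_def]
  refine ContinuousLinearMap.opNorm_le_bound _ zero_le_one (fun x => ?_)
  have key : Matrix.single i j (1:ℝ) *ᵥ (WithLp.equiv 2 (Fin d → ℝ) x) =
      Pi.single i ((WithLp.equiv 2 (Fin d → ℝ) x) j) := by
    ext k
    simp [Matrix.single, mulVec, dotProduct, Pi.single_apply, ite_and, eq_comm]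
  calc ‖(LinearEquiv.trans toEuclideanLin LinearMap.toContinuousLinearMap (Matrix.single i j (1:ℝ))) x‖
      = ‖(WithLp.equiv 2 (Fin d → ℝ)).symm (Pi.single i ((WithLp.equiv 2 (Fin d → ℝ) x) j))‖ := by
        rw [LinearEquiv.trans_apply]
        erw [LinearMap.coe_toContinuousLinearMap']
        rw [toEuclideanLin_apply]; exact congrArg (fun v => ‖WithLp.toLp 2 v‖) key
    _ = ‖EuclideanSpace.single i ((WithLp.equiv 2 (Fin d → ℝ) x) j)‖ := rfl
    _ = |x j| := by rw [EuclideanSpace.norm_single]; rfl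
    _ ≤ 1 * ‖x‖ := by rw [one_mul]; exact coord_le_norm x j

lemma norm_le_sum (A : Matrix (Fin d) (Fin d) ℝ) : ‖A‖ ≤ ∑ i, ∑ j, |A i j| := by
  nth_rewrite 1 [matrix_eq_sum_single A]
  refine le_trans (norm_sum_le _ _) ?_
  refine Finset.sum_le_sum fun i _ => le_trans (norm_sum_le _ _) (Finset.sum_le_sum fun j _ => ?_)
  have h1 : Matrix.single i j (A i j) = A i j • Matrix.single i j (1:ℝ) := by
    rw [smul_single, smul_eq_mul, mul_one]
  rw [h1, norm_smul, Real.norm_eq_abs]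
  calc |A i j| * ‖Matrix.single i j (1:ℝ)‖ ≤ |A i j| * 1 :=
        mul_le_mul_of_nonneg_left (norm_stdBasisMatrix_le i j) (abs_nonneg _)
    _ = |A i j| := mul_one _

lemma abs_det_le {N : Matrix (Fin d) (Fin d) ℝ} {c : ℝ} (hc : 0 ≤ c) (h : ∀ i j, |N i j| ≤ c) :
    |N.det| ≤ (Nat.factorial d : ℝ) * c ^ d := by
  rw [det_apply]
  refine le_trans (Finset.abs_sum_le_sum_abs _ _) ?_
  have key : ∀ σ : Equiv.Perm (Fin d), |Equiv.Perm.sign σ • ∏ i, N (σ i) i| ≤ c ^ d := by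
    intro σ
    have h2 : |∏ i, N (σ i) i| ≤ c ^ d := by
      rw [Finset.abs_prod]
      calc ∏ i, |N (σ i) i| ≤ ∏ _i : Fin d, c :=
            Finset.prod_le_prod (fun i _ => abs_nonneg _) (fun i _ => h _ _)
        _ = c ^ d := by rw [Finset.prod_const, Finset.card_univ, Fintype.card_fin]
    rcases Int.units_eq_one_or (Equiv.Perm.sign σ) with hs | hs <;> rw [hs] <;> simpa
  calc ∑ σ : Equiv.Perm (Fin d), |Equiv.Perm.sign σ • ∏ i, N (σ i) i|
      ≤ ∑ _σ : Equiv.Perm (Fin d), c ^ d := Finset.sum_le_sum (fun σ _ => key σ)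
    _ = (Nat.factorial d : ℝ) * c ^ d := by
        rw [Finset.sum_const, Finset.card_univ, Fintype.card_perm, Fintype.card_fin,
          nsmul_eq_mul]

lemma norm_inv_le {X : Matrix (Fin d) (Fin d) ℝ} (hdet : 1 ≤ |X.det|) {c : ℝ}
    (hXc : ‖X‖ ≤ c) :
    ‖X⁻¹‖ ≤ (d : ℝ)^2 * (Nat.factorial d : ℝ) * (max 1 c) ^ d := by
  have hentry : ∀ i j, |X.adjugate i j| ≤ (Nat.factorial d : ℝ) * (max 1 c) ^ d := by
    intro i j
    rw [adjugate_apply]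
    refine abs_det_le (le_trans zero_le_one (le_max_left _ _)) (fun k l => ?_)
    rcases eq_or_ne k j with rfl | hk
    · rw [updateRow_self]
      rcases eq_or_ne l i with rfl | hl
      · simp
      · rw [Pi.single_eq_of_ne hl]; simp
    · rw [updateRow_ne hk]
      calc |X k l| ≤ ‖X‖ := entry_le_norm X k l
        _ ≤ c := hXc
        _ ≤ max 1 c := le_max_right _ _
  rw [inv_def, norm_smul]
  have h1 : ‖Ring.inverse X.det‖ ≤ 1 := by
    rw [Ring.inverse_eq_inv', Real.norm_eq_abs, abs_inv]
    rw [inv_le_one_iff₀]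
    right; exact hdet
  calc ‖Ring.inverse X.det‖ * ‖X.adjugate‖ ≤ 1 * ‖X.adjugate‖ :=
        mul_le_mul_of_nonneg_right h1 (norm_nonneg _)
    _ = ‖X.adjugate‖ := one_mul _
    _ ≤ ∑ i, ∑ j, |X.adjugate i j| := norm_le_sum _
    _ ≤ ∑ _i : Fin d, ∑ _j : Fin d, (Nat.factorial d : ℝ) * (max 1 c) ^ d := by
        refine Finset.sum_le_sum fun i _ => Finset.sum_le_sum fun j _ => hentry i j
    _ = (d:ℝ)^2 * ((Nat.factorial d : ℝ) * (max 1 c) ^ d) := by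
        simp [Finset.sum_const, Finset.card_univ, nsmul_eq_mul]; ring
    _ = (d : ℝ)^2 * (Nat.factorial d : ℝ) * (max 1 c) ^ d := by ring

lemma eval_charpoly_eq (M : Matrix (Fin d) (Fin d) ℂ) (μ : ℂ) :
    (M.charpoly).eval μ = (Matrix.scalar (Fin d) μ - M).det := by
  rw [Matrix.charpoly, ← coe_evalRingHom, RingHom.map_det]
  congr 1
  ext i j
  rw [RingHom.mapMatrix_apply, Matrix.map_apply, coe_evalRingHom]
  rcases eq_or_ne i j with rfl | h
  · simp [charmatrix_apply_eq, Matrix.scalar_apply, Matrix.diagonal_apply_eq]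
  · simp [charmatrix_apply_ne _ _ _ h, Matrix.scalar_apply, Matrix.diagonal_apply_ne _ h]

lemma root_mem_spectrum (M : Matrix (Fin d) (Fin d) ℂ) (μ : ℂ)
    (h : (M.charpoly).IsRoot μ) : μ ∈ spectrum ℂ M := by
  rw [spectrum.mem_iff]
  intro hu
  rw [Matrix.isUnit_iff_isUnit_det] at hu
  have halg : (algebraMap ℂ (Matrix (Fin d) (Fin d) ℂ)) μ = Matrix.scalar (Fin d) μ := rfl
  rw [halg] at hu
  rw [Polynomial.IsRoot, eval_charpoly_eq] at h
  rw [h] at hu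
  simp at hu

lemma one_lt_multiset_prod (s : Multiset ℝ) (hs : s ≠ 0) (h : ∀ x ∈ s, 1 < x) :
    1 < s.prod := by
  induction s using Multiset.induction with
  | empty => simp at hs
  | cons a t ih =>
    rw [Multiset.prod_cons]
    rcases eq_or_ne t 0 with rfl | ht
    · simpa using h a (by simp)
    · have h1 : 1 < a := h a (by simp)
      have h2 : 1 < t.prod := ih ht (fun x hx => h x (by simp [hx]))
      nlinarith

lemma one_lt_abs_det {A : Matrix (Fin d) (Fin d) ℝ} (hA : Expansive A) (hd : 0 < d) :
    1 < |A.det| := by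
  set M : Matrix (Fin d) (Fin d) ℂ := A.map Complex.ofReal with hM
  have hdet : M.det = Complex.ofReal A.det := by
    rw [hM]
    exact (RingHom.map_det Complex.ofRealHom A).symm
  have habs : |A.det| = ‖M.det‖ := by
    rw [hdet, Complex.norm_real, Real.norm_eq_abs]
  rw [habs, Matrix.det_eq_prod_roots_charpoly M]
  have hcard : Multiset.card (M.charpoly.roots) = d := by
    rw [(Polynomial.splits_iff_card_roots).mp (IsAlgClosed.splits M.charpoly),
      Matrix.charpoly_natDegree_eq_dim, Fintype.card_fin]
  rw [show ‖M.charpoly.roots.prod‖ = (M.charpoly.roots.map (fun x => ‖x‖)).prod from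
    map_multiset_prod (normHom (α := ℂ)) _]
  refine one_lt_multiset_prod _ ?_ ?_
  · intro h0
    rw [Multiset.map_eq_zero] at h0
    rw [h0] at hcard
    simp at hcard
    omega
  · intro x hx
    rw [Multiset.mem_map] at hx
    obtain ⟨μ, hμ, rfl⟩ := hx
    exact hA.2 μ (root_mem_spectrum M μ (Polynomial.isRoot_of_mem_roots hμ))

lemma det_zpow' (A : Matrix (Fin d) (Fin d) ℝ) (k : ℤ) : (A ^ k).det = A.det ^ k := by
  cases k with
  | ofNat n =>
    rw [Int.ofNat_eq_natCast, zpow_natCast, zpow_natCast, det_pow]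
  | negSucc n =>
    rw [Int.negSucc_eq, show (-((n:ℤ)+1)) = -(((n+1 : ℕ)):ℤ) by push_cast; ring,
      Matrix.zpow_neg_natCast, Matrix.det_nonsing_inv, det_pow, Ring.inverse_eq_inv',
      _root_.zpow_neg, zpow_natCast]

lemma zpow_eq_exp {a : ℝ} (ha : 0 < a) (k : ℤ) : a ^ k = Real.exp (Real.log a * k) := by
  rw [← Real.rpow_intCast a k, Real.rpow_def_of_pos ha]

lemma one_le_det_aux {a b : ℝ} (ha : 1 < a) (hb : 1 < b) (k m : ℤ)
    (hm : (m : ℝ) ≤ (Real.log a / Real.log b) * k) :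
    1 ≤ a ^ k * b ^ (-m) := by
  have ha0 : (0:ℝ) < a := lt_trans one_pos ha
  have hb0 : (0:ℝ) < b := lt_trans one_pos hb
  have hlb : 0 < Real.log b := Real.log_pos hb
  rw [zpow_eq_exp ha0, zpow_eq_exp hb0, ← Real.exp_add]
  rw [show (1:ℝ) = Real.exp 0 from (Real.exp_zero).symm]
  rw [Real.exp_le_exp]
  have h2 : (m:ℝ) * Real.log b ≤ (Real.log a / Real.log b) * k * Real.log b :=
    mul_le_mul_of_nonneg_right hm hlb.le
  have h3 : (Real.log a / Real.log b) * k * Real.log b = Real.log a * k := by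
    field_simp
  push_cast
  nlinarith

lemma abs_zpow' (a : ℝ) (k : ℤ) : |a ^ k| = |a| ^ k := by
  cases k with
  | ofNat n => rw [Int.ofNat_eq_natCast, zpow_natCast, zpow_natCast, abs_pow]
  | negSucc n => rw [zpow_negSucc, zpow_negSucc, abs_inv, abs_pow]

lemma theta_aux (x : ℝ) : ⌈x⌉ - ⌊x⌋ = 0 ∨ ⌈x⌉ - ⌊x⌋ = 1 := by
  have h1 := Int.ceil_le_floor_add_one x
  have h2 := Int.floor_le_ceil x
  omega

lemma floor_neg_arg {d : ℕ} (A B : Matrix (Fin d) (Fin d) ℝ) (k : ℤ) :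
    ⌊eps A B * (-k : ℤ)⌋ = -⌈eps A B * k⌉ := by
  push_cast
  rw [mul_neg, Int.floor_neg]

lemma norm_zpow_theta {B : Matrix (Fin d) (Fin d) ℝ} {θ : ℤ} (hθ : θ = 0 ∨ θ = 1)
    (X : Matrix (Fin d) (Fin d) ℝ) {M : ℝ} (hXM : ‖X‖ ≤ M) :
    ‖X * B ^ θ‖ ≤ M * max 1 ‖B‖ ∧ ‖B ^ θ * X‖ ≤ M * max 1 ‖B‖ := by
  have hM0 : 0 ≤ M := le_trans (norm_nonneg X) hXM
  rcases hθ with rfl | rfl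
  · rw [zpow_zero, mul_one, one_mul]
    constructor <;>
      exact le_trans hXM (le_mul_of_one_le_right hM0 (le_max_left _ _))
  · rw [zpow_one]
    constructor
    · exact le_trans (norm_mul_le _ _)
        (mul_le_mul hXM (le_max_right _ _) (norm_nonneg _) hM0)
    · calc ‖B * X‖ ≤ ‖B‖ * ‖X‖ := norm_mul_le _ _
        _ ≤ max 1 ‖B‖ * M := mul_le_mul (le_max_right _ _) hXM (norm_nonneg _)
            (le_trans zero_le_one (le_max_left _ _))
        _ = M * max 1 ‖B‖ := mul_comm _ _

lemma flip₁ {A B : Matrix (Fin d) (Fin d) ℝ} (hd : 0 < d) (hA : Expansive A) (hB : Expansive B)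
    {M : ℝ} (H : ∀ k : ℤ, ‖A ^ (-k) * B ^ ⌊eps A B * k⌋‖ ≤ M) :
    ∀ k : ℤ, ‖B ^ ⌊eps A B * k⌋ * A ^ (-k)‖ ≤
      (d : ℝ)^2 * (Nat.factorial d : ℝ) * (max 1 (M * max 1 ‖B‖)) ^ d := by
  intro k
  have hAu : IsUnit A.det := (Matrix.isUnit_iff_isUnit_det A).mp hA.1
  have hBu : IsUnit B.det := (Matrix.isUnit_iff_isUnit_det B).mp hB.1
  set m : ℤ := ⌊eps A B * k⌋ with hm
  set θ : ℤ := ⌈eps A B * k⌉ - m with hθdef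
  have hθ : θ = 0 ∨ θ = 1 := theta_aux _
  -- step 1 : ‖A ^ k * B ^ (-m)‖ ≤ M * max 1 ‖B‖
  have hX : ‖A ^ k * B ^ (-m)‖ ≤ M * max 1 ‖B‖ := by
    have h1 := H (-k)
    rw [neg_neg, floor_neg_arg] at h1
    have hexp : -⌈eps A B * (k:ℝ)⌉ + θ = -m := by omega
    have hsplit : (A ^ k * B ^ (-⌈eps A B * (k:ℝ)⌉)) * B ^ θ = A ^ k * B ^ (-m) := by
      rw [mul_assoc, ← Matrix.zpow_add hBu, hexp]
    rw [← hsplit]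
    exact (norm_zpow_theta hθ _ h1).1
  -- step 2 : determinant bound
  have hdet : 1 ≤ |(A ^ k * B ^ (-m)).det| := by
    rw [det_mul, det_zpow', det_zpow', abs_mul, abs_zpow', abs_zpow']
    exact one_le_det_aux (one_lt_abs_det hA hd) (one_lt_abs_det hB hd) k m
      (Int.floor_le _)
  -- step 3 : inverse
  have hinv : (A ^ k * B ^ (-m))⁻¹ = B ^ m * A ^ (-k) := by
    rw [Matrix.mul_inv_rev, ← Matrix.zpow_neg hBu, ← Matrix.zpow_neg hAu, neg_neg]
  rw [← hinv]
  exact norm_inv_le hdet hX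

lemma flip₂ {A B : Matrix (Fin d) (Fin d) ℝ} (hd : 0 < d) (hA : Expansive A) (hB : Expansive B)
    {M : ℝ} (H : ∀ k : ℤ, ‖B ^ ⌊eps A B * k⌋ * A ^ (-k)‖ ≤ M) :
    ∀ k : ℤ, ‖A ^ (-k) * B ^ ⌊eps A B * k⌋‖ ≤
      (d : ℝ)^2 * (Nat.factorial d : ℝ) * (max 1 (M * max 1 ‖B‖)) ^ d := by
  intro k
  have hAu : IsUnit A.det := (Matrix.isUnit_iff_isUnit_det A).mp hA.1
  have hBu : IsUnit B.det := (Matrix.isUnit_iff_isUnit_det B).mp hB.1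
  set m : ℤ := ⌊eps A B * k⌋ with hm
  set θ : ℤ := ⌈eps A B * k⌉ - m with hθdef
  have hθ : θ = 0 ∨ θ = 1 := theta_aux _
  have hY : ‖B ^ (-m) * A ^ k‖ ≤ M * max 1 ‖B‖ := by
    have h1 := H (-k)
    rw [neg_neg, floor_neg_arg] at h1
    have hexp : θ + -⌈eps A B * (k:ℝ)⌉ = -m := by omega
    have hsplit : B ^ θ * (B ^ (-⌈eps A B * (k:ℝ)⌉) * A ^ k) = B ^ (-m) * A ^ k := by
      rw [← mul_assoc, ← Matrix.zpow_add hBu, hexp]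
    rw [← hsplit]
    exact (norm_zpow_theta hθ _ h1).2
  have hdet : 1 ≤ |(B ^ (-m) * A ^ k).det| := by
    rw [det_mul, det_zpow', det_zpow', abs_mul, abs_zpow', abs_zpow', mul_comm]
    exact one_le_det_aux (one_lt_abs_det hA hd) (one_lt_abs_det hB hd) k m
      (Int.floor_le _)
  have hinv : (B ^ (-m) * A ^ k)⁻¹ = A ^ (-k) * B ^ m := by
    rw [Matrix.mul_inv_rev, ← Matrix.zpow_neg hBu, ← Matrix.zpow_neg hAu, neg_neg]
  rw [← hinv]
  exact norm_inv_le hdet hY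

end Aux

/-- Equivalence of expansive matrices is preserved under transposition. -/
theorem equiv_transpose_iff {d : ℕ} (A B : Matrix (Fin d) (Fin d) ℝ)
    (hA : Expansive A) (hB : Expansive B) :
    (∃ M : ℝ, ∀ k : ℤ, opNorm (Aᵀ ^ (-k) * Bᵀ ^ ⌊eps A B * k⌋) ≤ M) ↔
    (∃ M : ℝ, ∀ k : ℤ, opNorm (A ^ (-k) * B ^ ⌊eps A B * k⌋) ≤ M) := by
  rcases Nat.eq_zero_or_pos d with rfl | hd
  · have hzero : ∀ Z : Matrix (Fin 0) (Fin 0) ℝ, opNorm Z ≤ 0 := by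
      intro Z
      have hz : (Matrix.toEuclideanCLM (𝕜 := ℝ) (n := Fin 0) Z) = 0 :=
        ContinuousLinearMap.ext fun x => Subsingleton.elim _ _
      rw [opNorm, hz, norm_zero]
    exact ⟨fun _ => ⟨0, fun k => hzero _⟩, fun _ => ⟨0, fun k => hzero _⟩⟩
  · have key : ∀ k : ℤ, opNorm (Aᵀ ^ (-k) * Bᵀ ^ ⌊eps A B * k⌋) =
        ‖B ^ ⌊eps A B * k⌋ * A ^ (-k)‖ := by
      intro k
      rw [opNorm_eq, ← transpose_zpow, ← transpose_zpow, ← transpose_mul, norm_transpose']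
    constructor
    · rintro ⟨M, H⟩
      refine ⟨(d : ℝ)^2 * (Nat.factorial d : ℝ) * (max 1 (M * max 1 ‖B‖)) ^ d, fun k => ?_⟩
      rw [opNorm_eq]
      exact flip₂ hd hA hB (M := M) (fun j => by rw [← key j]; exact H j) k
    · rintro ⟨M, H⟩
      refine ⟨(d : ℝ)^2 * (Nat.factorial d : ℝ) * (max 1 (M * max 1 ‖B‖)) ^ d, fun k => ?_⟩
      rw [key]
      exact flip₁ hd hA hB (M := M) (fun j => by rw [← opNorm_eq]; exact H j) k
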